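/- Entropic stability extends from exponential tilts to all absolutely continuous measures: let π be a probability measure on ℝ^d whose cumulant generating function χ(y) := log E_{x∼π}[exp(⟨y,x⟩)] is finite for every y ∈ ℝ^d, suppose b(T_y π) exists for every y, and suppose π is α-entropically stable, i.e. ½‖b(T_y π) − b(π)‖₂² ≤ α·KL(T_y π‖π) for all y ∈ ℝ^d. Then for every probability measure ν absolutely continuous with respect to π whose barycentre b(ν) exists, ½‖b(ν) − b(π)‖₂² ≤ α · KL(ν ‖ π). -/

import Mathlib

open MeasureTheory Real

/-- Real-valued Kullback-Leibler divergence `KL(ν‖ρ) = ∫ log (dν/dρ) dν`. -/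
noncomputable def klReal {α : Type*} [MeasurableSpace α] (ν ρ : Measure α) : ℝ :=
  ∫ x, Real.log ((ν.rnDeriv ρ x).toReal) ∂ν

/-- The exponential tilt `T_y μ`: the probability measure with density proportional to
`exp ⟨y, ·⟩` with respect to `μ`. -/
noncomputable def expTilt (d : ℕ) (μ : Measure (EuclideanSpace ℝ (Fin d)))
    (y : EuclideanSpace ℝ (Fin d)) : Measure (EuclideanSpace ℝ (Fin d)) :=
  μ.withDensity (fun x => ENNReal.ofReal
    (Real.exp ((inner ℝ y x : ℝ)) / ∫ x', Real.exp ((inner ℝ y x' : ℝ)) ∂μ))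

/-- The barycentre `b(μ) = E_{x∼μ}[x]` of a measure. -/
noncomputable def bary (d : ℕ) (μ : Measure (EuclideanSpace ℝ (Fin d))) :
    EuclideanSpace ℝ (Fin d) :=
  ∫ x, x ∂μ

lemma meas_exp_inner (d : ℕ) (y : EuclideanSpace ℝ (Fin d)) :
    Measurable (fun x : EuclideanSpace ℝ (Fin d) => Real.exp ((inner ℝ y x : ℝ))) :=
  (Real.continuous_exp.comp (continuous_const.inner continuous_id)).measurable

/-- KL of a tilt equals `⟪y, b(T_y μ)⟫ - log Z`. -/
lemma klReal_expTilt (d : ℕ) (μ : Measure (EuclideanSpace ℝ (Fin d))) [IsProbabilityMeasure μ]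
    (y : EuclideanSpace ℝ (Fin d))
    (hcgf : Integrable (fun x => Real.exp ((inner ℝ y x : ℝ))) μ)
    (hbar : Integrable (fun x => x) (expTilt d μ y)) :
    klReal (expTilt d μ y) μ =
      (inner ℝ y (bary d (expTilt d μ y)) : ℝ) - Real.log (∫ x, Real.exp ((inner ℝ y x : ℝ)) ∂μ) := by
  set Z : ℝ := ∫ x, Real.exp ((inner ℝ y x : ℝ)) ∂μ with hZdef
  have hZ : 0 < Z := integral_exp_pos hcgf
  set f : EuclideanSpace ℝ (Fin d) → ℝ := fun x => Real.exp ((inner ℝ y x : ℝ)) / Z with hfdef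
  have hfpos : ∀ x, 0 < f x := fun x => div_pos (Real.exp_pos _) hZ
  have hfmeas : Measurable fun x => ENNReal.ofReal (f x) :=
    ((meas_exp_inner d y).div_const Z).ennreal_ofReal
  have hT : expTilt d μ y = μ.withDensity (fun x => ENNReal.ofReal (f x)) := rfl
  have hac : expTilt d μ y ≪ μ := by rw [hT]; exact withDensity_absolutelyContinuous μ _
  have hrn : (expTilt d μ y).rnDeriv μ =ᵐ[μ] fun x => ENNReal.ofReal (f x) := by
    rw [hT]; exact Measure.rnDeriv_withDensity μ hfmeas
  have hprob : IsProbabilityMeasure (expTilt d μ y) := by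
    constructor
    rw [hT, withDensity_apply _ MeasurableSet.univ, setLIntegral_univ,
      ← ofReal_integral_eq_lintegral_ofReal (hcgf.div_const Z)
        (Filter.Eventually.of_forall fun x => (hfpos x).le)]
    have : ∫ x, f x ∂μ = 1 := by rw [hfdef, integral_div, ← hZdef, div_self hZ.ne']
    rw [this]; simp
  have hinner : Integrable (fun x => (inner ℝ y x : ℝ)) (expTilt d μ y) :=
    Integrable.const_inner y hbar
  have h1 : klReal (expTilt d μ y) μ = ∫ x, ((inner ℝ y x : ℝ) - Real.log Z) ∂(expTilt d μ y) := by
    apply integral_congr_ae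
    filter_upwards [hac.ae_le hrn] with x hx
    rw [hx, ENNReal.toReal_ofReal (hfpos x).le, hfdef]
    rw [Real.log_div (Real.exp_ne_zero _) hZ.ne', Real.log_exp]
  rw [h1, integral_sub hinner (integrable_const _), integral_const, integral_inner hbar y]
  simp [bary, measure_univ]

/-- Gibbs' inequality: `⟪θ, b(ν)⟫ - log Z(θ) ≤ KL(ν‖μ)`. -/
lemma gibbs_ineq (d : ℕ) (μ : Measure (EuclideanSpace ℝ (Fin d))) [IsProbabilityMeasure μ]
    (ν : Measure (EuclideanSpace ℝ (Fin d))) [IsProbabilityMeasure ν] (hac : ν ≪ μ)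
    (hx : Integrable (fun x => x) ν)
    (hlog : Integrable (fun x => Real.log ((ν.rnDeriv μ x).toReal)) ν)
    (θ : EuclideanSpace ℝ (Fin d))
    (hcgf : Integrable (fun x => Real.exp ((inner ℝ θ x : ℝ))) μ) :
    (inner ℝ θ (bary d ν) : ℝ) - Real.log (∫ x, Real.exp ((inner ℝ θ x : ℝ)) ∂μ) ≤ klReal ν μ := by
  set Z : ℝ := ∫ x, Real.exp ((inner ℝ θ x : ℝ)) ∂μ with hZdef
  have hZ : 0 < Z := integral_exp_pos hcgf
  set f : EuclideanSpace ℝ (Fin d) → ℝ := fun x => Real.exp ((inner ℝ θ x : ℝ)) / Z with hfdef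
  have hfpos : ∀ x, 0 < f x := fun x => div_pos (Real.exp_pos _) hZ
  set D : EuclideanSpace ℝ (Fin d) → ENNReal := ν.rnDeriv μ with hDdef
  have hDmeas : Measurable D := Measure.measurable_rnDeriv ν μ
  set h : EuclideanSpace ℝ (Fin d) → ENNReal := fun x => ENNReal.ofReal (f x) / D x with hhdef
  have hhmeas : Measurable h := (((meas_exp_inner d θ).div_const Z).ennreal_ofReal).div hDmeas
  haveI : ν.HaveLebesgueDecomposition μ := Measure.haveLebesgueDecomposition_of_finiteMeasure
  have hlint : ∫⁻ x, h x ∂ν ≤ 1 := by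
    calc ∫⁻ x, h x ∂ν = ∫⁻ x, (D * h) x ∂μ := by
          conv_lhs => rw [← Measure.withDensity_rnDeriv_eq ν μ hac]
          exact lintegral_withDensity_eq_lintegral_mul μ hDmeas hhmeas
      _ ≤ ∫⁻ x, ENNReal.ofReal (f x) ∂μ :=
          lintegral_mono fun x => ENNReal.mul_div_le
      _ = ENNReal.ofReal (∫ x, f x ∂μ) :=
          (ofReal_integral_eq_lintegral_ofReal (hcgf.div_const Z)
            (Filter.Eventually.of_forall fun x => (hfpos x).le)).symm
      _ = 1 := by
          rw [hfdef, integral_div, ← hZdef, div_self hZ.ne']; simp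
  have hDpos : ∀ᵐ x ∂ν, 0 < D x := Measure.rnDeriv_pos hac
  have hDlt : ∀ᵐ x ∂ν, D x < ⊤ := (Measure.rnDeriv_lt_top ν μ).filter_mono hac.ae_le
  have hhlt : ∀ᵐ x ∂ν, h x < ⊤ := by
    filter_upwards [hDpos] with x hxp
    exact ENNReal.div_lt_top ENNReal.ofReal_ne_top hxp.ne'
  set F : EuclideanSpace ℝ (Fin d) → ℝ := fun x => (h x).toReal with hFdef
  have hFint : Integrable F ν :=
    integrable_toReal_of_lintegral_ne_top hhmeas.aemeasurable
      (lt_of_le_of_lt hlint ENNReal.one_lt_top).ne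
  have hFle : ∫ x, F x ∂ν ≤ 1 := by
    rw [hFdef, integral_toReal hhmeas.aemeasurable hhlt]
    have := ENNReal.toReal_mono ENNReal.one_ne_top hlint
    simpa using this
  have hpt : ∀ᵐ x ∂ν, (inner ℝ θ x : ℝ) - Real.log Z - Real.log ((D x).toReal) ≤ F x - 1 := by
    filter_upwards [hDpos, hDlt] with x hxp hxt
    have hgx : 0 < (D x).toReal := ENNReal.toReal_pos hxp.ne' hxt.ne
    have hFx : F x = f x / (D x).toReal := by
      rw [hFdef, hhdef]
      simp only [ENNReal.toReal_div, ENNReal.toReal_ofReal (hfpos x).le]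
    have hFpos : 0 < F x := by rw [hFx]; exact div_pos (hfpos x) hgx
    have hlogF : Real.log (F x) = (inner ℝ θ x : ℝ) - Real.log Z - Real.log ((D x).toReal) := by
      rw [hFx, Real.log_div (hfpos x).ne' hgx.ne', hfdef,
        Real.log_div (Real.exp_ne_zero _) hZ.ne', Real.log_exp]
    rw [← hlogF]
    linarith [Real.log_le_sub_one_of_pos hFpos]
  have hLint : Integrable (fun x => (inner ℝ θ x : ℝ) - Real.log Z - Real.log ((D x).toReal)) ν :=
    ((Integrable.const_inner θ hx).sub (integrable_const _)).sub hlog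
  have hint := integral_mono_ae hLint (hFint.sub (integrable_const 1)) hpt
  have e1 : ∫ x, ((inner ℝ θ x : ℝ) - Real.log Z - Real.log ((D x).toReal)) ∂ν =
      ∫ x, ((inner ℝ θ x : ℝ) - Real.log Z) ∂ν - ∫ x, Real.log ((D x).toReal) ∂ν :=
    integral_sub ((Integrable.const_inner θ hx).sub (integrable_const _)) hlog
  have e2 : ∫ x, ((inner ℝ θ x : ℝ) - Real.log Z) ∂ν =
      ∫ x, (inner ℝ θ x : ℝ) ∂ν - ∫ _x, Real.log Z ∂ν :=
    integral_sub (Integrable.const_inner θ hx) (integrable_const _)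
  have e3 : ∫ x, (inner ℝ θ x : ℝ) ∂ν = (inner ℝ θ (bary d ν) : ℝ) := integral_inner hx θ
  have e3' : ∫ _x, Real.log Z ∂ν = Real.log Z := by
    rw [integral_const]; simp
  have e4 : ∫ x, (F x - 1) ∂ν = ∫ x, F x ∂ν - 1 := by
    rw [integral_sub hFint (integrable_const 1), integral_const]; simp
  have hkl : klReal ν μ = ∫ x, Real.log ((D x).toReal) ∂ν := rfl
  simp only [Pi.sub_apply] at hint
  rw [e4] at hint
  rw [e1, e2, e3, e3'] at hint
  rw [hkl]
  linarith

/-- **Entropic stability extends from exponential tilts to all absolutely continuous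
measures.**  Let `μ` be a probability measure on `ℝ^d` whose cumulant generating
function is finite everywhere, whose tilts all have barycentres, and which is
`α`-entropically stable:  `½‖b(T_y μ) - b(μ)‖² ≤ α·KL(T_y μ‖μ)` for every `y`.
Then for every probability measure `ν ≪ μ` with a barycentre (and finite relative
entropy), `½‖b(ν) - b(μ)‖² ≤ α · KL(ν‖μ)`. -/
theorem entropic_stability_extends (d : ℕ)
    (μ : Measure (EuclideanSpace ℝ (Fin d))) [IsProbabilityMeasure μ]
    (hcgf : ∀ y : EuclideanSpace ℝ (Fin d),
      Integrable (fun x => Real.exp ((inner ℝ y x : ℝ))) μ)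
    (hbar : ∀ y : EuclideanSpace ℝ (Fin d), Integrable (fun x => x) (expTilt d μ y))
    (α : ℝ) (hα : 0 < α)
    (hstable : ∀ y : EuclideanSpace ℝ (Fin d),
      (1 / 2) * ‖bary d (expTilt d μ y) - bary d μ‖ ^ 2 ≤
        α * klReal (expTilt d μ y) μ) :
    ∀ ν : Measure (EuclideanSpace ℝ (Fin d)), IsProbabilityMeasure ν → ν ≪ μ →
      Integrable (fun x => x) ν →
      Integrable (fun x => Real.log ((ν.rnDeriv μ x).toReal)) ν →
      (1 / 2) * ‖bary d ν - bary d μ‖ ^ 2 ≤ α * klReal ν μ := by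
  intro ν hν hac hx hlog
  haveI := hν
  set v : EuclideanSpace ℝ (Fin d) := bary d ν - bary d μ with hv
  set θ : EuclideanSpace ℝ (Fin d) := α⁻¹ • v with hθdef
  -- the cgf bound from entropic stability of tilts
  have hchi : Real.log (∫ x, Real.exp ((inner ℝ θ x : ℝ)) ∂μ) ≤
      (inner ℝ θ (bary d μ) : ℝ) + α * ‖θ‖ ^ 2 / 2 := by
    have hkl := klReal_expTilt d μ θ (hcgf θ) (hbar θ)
    have hs := hstable θ
    rw [hkl] at hs
    have hcs : (inner ℝ θ (bary d (expTilt d μ θ)) : ℝ) ≤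
        (inner ℝ θ (bary d μ) : ℝ) + ‖θ‖ * ‖bary d (expTilt d μ θ) - bary d μ‖ := by
      have h2 := real_inner_le_norm θ (bary d (expTilt d μ θ) - bary d μ)
      rw [inner_sub_right] at h2
      linarith
    nlinarith [sq_nonneg (‖bary d (expTilt d μ θ) - bary d μ‖ - α * ‖θ‖),
      norm_nonneg (bary d (expTilt d μ θ) - bary d μ), hα,
      mul_le_mul_of_nonneg_left hcs hα.le]
  have hgibbs := gibbs_ineq d μ ν hac hx hlog θ (hcgf θ)
  have hiv : (inner ℝ θ (bary d ν) : ℝ) - (inner ℝ θ (bary d μ) : ℝ) = α⁻¹ * ‖v‖ ^ 2 := by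
    rw [← inner_sub_right, ← hv, hθdef, real_inner_smul_left, real_inner_self_eq_norm_sq]
  have hnθ : ‖θ‖ ^ 2 = α⁻¹ ^ 2 * ‖v‖ ^ 2 := by
    rw [hθdef, norm_smul, Real.norm_eq_abs, abs_of_pos (inv_pos.mpr hα)]
    ring
  rw [hnθ] at hchi
  have e6 : α * (α⁻¹ ^ 2 * ‖v‖ ^ 2) / 2 = α⁻¹ * ‖v‖ ^ 2 / 2 := by
    field_simp
  rw [e6] at hchi
  have h2 : α⁻¹ * ‖v‖ ^ 2 / 2 ≤ klReal ν μ := by linarith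
  have h3 := mul_le_mul_of_nonneg_left h2 hα.le
  have e7 : α * (α⁻¹ * ‖v‖ ^ 2 / 2) = 1 / 2 * ‖v‖ ^ 2 := by
    field_simp
  linarith
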